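/- (Lemma 4) Let each f_{n,i} be differentiable and convex, let q_min = min_n q_n and q_max = max_n q_n, fix x = (x_1,…,x_N) ∈ ℝ^{Np} and a gradient table y = (y_{n,i}). For a joint index i = (i_1,…,i_N) ∈ ∏_n {1,…,q_n}, let y⁺(i) denote the table with y⁺(i)_{n,j} = x_n if j = i_n and y⁺(i)_{n,j} = y_{n,j} otherwise. Then the uniform average over joint indices satisfies (1/∏_n q_n) Σ_i p(y⁺(i)) ≤ (1 − 1/q_max) p(y) + (1/q_min) [f(x) − f(x*) − ⟨∇f(x*), x − x*⟩]. -/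

import Mathlib

open Finset
open scoped RealInnerProductSpace

noncomputable section

/-- Block vectors of `ℝ^{Np}`: one vector of `ℝᵖ` per node. -/
abbrev Evec (p : ℕ) := EuclideanSpace ℝ (Fin p)

/-- The local objective of node `n`: `f_n(w) = (1/q_n) ∑_i f_{n,i}(w)`. -/
def locf {N p : ℕ} {q : Fin N → ℕ}
    (f : (n : Fin N) → Fin (q n) → Evec p → ℝ) (n : Fin N) (w : Evec p) : ℝ :=
  (q n : ℝ)⁻¹ * ∑ i, f n i w

/-- The local stochastic averaging gradient of node `n` for index choice `j`:
`ĝ_n(j) = ∇f_{n,j}(x_n) − ∇f_{n,j}(y_{n,j}) + (1/q_n) ∑_i ∇f_{n,i}(y_{n,i})`. -/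
def hatg {N p : ℕ} {q : Fin N → ℕ}
    (f : (n : Fin N) → Fin (q n) → Evec p → ℝ)
    (x : Fin N → Evec p)
    (y : (n : Fin N) → Fin (q n) → Evec p)
    (n : Fin N) (j : Fin (q n)) : Evec p :=
  gradient (f n j) (x n) - gradient (f n j) (y n j)
    + (q n : ℝ)⁻¹ • ∑ i, gradient (f n i) (y n i)

/-- `p(y) = ∑_n (1/q_n) ∑_i [f_{n,i}(y_{n,i}) − f_{n,i}(x̃*) − ⟨∇f_{n,i}(x̃*), y_{n,i} − x̃*⟩]`. -/
def ptbl {N p : ℕ} {q : Fin N → ℕ}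
    (f : (n : Fin N) → Fin (q n) → Evec p → ℝ)
    (xstar : Evec p)
    (y : (n : Fin N) → Fin (q n) → Evec p) : ℝ :=
  ∑ n, (q n : ℝ)⁻¹ * ∑ i,
    (f n i (y n i) - f n i xstar - ⟪gradient (f n i) xstar, y n i - xstar⟫)

/-- The aggregate optimality gap `f(x) − f(x*) − ⟨∇f(x*), x − x*⟩`, written blockwise. -/
def optgap {N p : ℕ} {q : Fin N → ℕ}
    (f : (n : Fin N) → Fin (q n) → Evec p → ℝ)
    (xstar : Evec p) (x : Fin N → Evec p) : ℝ :=
  ∑ n, (locf f n (x n) - locf f n xstar - ⟪gradient (locf f n) xstar, x n - xstar⟫)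

/-- The quadratic form `aᵀ (M ⊗ I_p) a` of an extended weight matrix, written blockwise. -/
def quadForm {N p : ℕ} (M : Matrix (Fin N) (Fin N) ℝ) (a : Fin N → Evec p) : ℝ :=
  ∑ n, ⟪a n, ∑ m, M n m • a m⟫

/-- The squared Euclidean norm of a block vector of `ℝ^{Np}`. -/
def sqnormB {N p : ℕ} (a : Fin N → Evec p) : ℝ := ∑ n, ‖a n‖^2

/-- The gradient table obtained from `y` by replacing, at each node `n`, the entry
`i n` by the current iterate `x n`. -/
def tblUpd {N p : ℕ} {q : Fin N → ℕ}
    (x : Fin N → Evec p)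
    (y : (n : Fin N) → Fin (q n) → Evec p)
    (i : (n : Fin N) → Fin (q n)) : (n : Fin N) → Fin (q n) → Evec p :=
  fun n => Function.update (y n) (i n) (x n)

end



noncomputable section

variable {E : Type*} [NormedAddCommGroup E] [InnerProductSpace ℝ E] [CompleteSpace E]

lemma first_order_aux {f : E → ℝ} (hc : ConvexOn ℝ Set.univ f) (hd : Differentiable ℝ f)
    (a v : E) : f a + ⟪gradient f a, v - a⟫ ≤ f v := by
  set g : ℝ → ℝ := fun t => f (a + t • (v - a)) with hg
  have hgd : ∀ t : ℝ, HasDerivAt g ⟪gradient f (a + t • (v - a)), v - a⟫ t := by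
    intro t
    have hf : HasFDerivAt f (InnerProductSpace.toDual ℝ E (gradient f (a + t • (v - a))))
        (a + t • (v - a)) := (hd _).hasGradientAt
    have hline : HasDerivAt (fun t : ℝ => a + t • (v - a)) (v - a) t := by
      simpa using ((hasDerivAt_id t).smul_const (v - a)).const_add a
    exact (hf.comp_hasDerivAt t hline).congr_deriv (by simp [InnerProductSpace.toDual_apply_apply])
  have hgc : ConvexOn ℝ Set.univ g := by
    refine ⟨convex_univ, fun t1 _ t2 _ α β hα hβ hαβ => ?_⟩
    have key : a + (α * t1 + β * t2) • (v - a)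
        = α • (a + t1 • (v - a)) + β • (a + t2 • (v - a)) := by
      have h1 : α • a + β • a = a := by rw [← add_smul, hαβ, one_smul]
      rw [smul_add, smul_add, add_smul, mul_smul, mul_smul]
      rw [show α • a + α • t1 • (v - a) + (β • a + β • t2 • (v - a))
          = (α • a + β • a) + (α • t1 • (v - a) + β • t2 • (v - a)) by abel, h1]
    have h2 := hc.2 (Set.mem_univ (a + t1 • (v - a))) (Set.mem_univ (a + t2 • (v - a))) hα hβ hαβ
    calc g (α * t1 + β * t2) = f (α • (a + t1 • (v - a)) + β • (a + t2 • (v - a))) := by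
          rw [hg]; simp only []; rw [key]
      _ ≤ α * g t1 + β * g t2 := by simpa [hg, smul_eq_mul] using h2
  have hslope := hgc.le_slope_of_hasDerivAt (Set.mem_univ (0:ℝ)) (Set.mem_univ (1:ℝ))
    zero_lt_one (hgd 0)
  have hs : slope g 0 1 = g 1 - g 0 := by simp [slope_def_field]
  rw [hs] at hslope
  have h0 : g 0 = f a := by simp [hg]
  have h1 : g 1 = f v := by simp [hg]
  rw [h0, h1] at hslope
  have : ⟪gradient f a, v - a⟫ ≤ f v - f a := by simpa using hslope
  linarith

lemma Dgap_nonneg {E : Type*} [NormedAddCommGroup E] [InnerProductSpace ℝ E] [CompleteSpace E]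
    {f : E → ℝ} (hc : ConvexOn ℝ Set.univ f) (hd : Differentiable ℝ f) (a v : E) :
    0 ≤ f v - f a - ⟪gradient f a, v - a⟫ := by
  have := first_order_aux hc hd a v
  linarith

def Dgap {E : Type*} [NormedAddCommGroup E] [InnerProductSpace ℝ E] [CompleteSpace E]
    (f : E → ℝ) (a v : E) : ℝ :=
  f v - f a - ⟪gradient f a, v - a⟫

lemma sum_pi_eval {N : ℕ} (q : Fin N → ℕ) (n : Fin N) (h : Fin (q n) → ℝ) :
    ∑ i : (m : Fin N) → Fin (q m), h (i n)
      = (∏ m ∈ Finset.univ.erase n, (q m : ℝ)) * ∑ j, h j := by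
  classical
  rw [Fintype.sum_equiv (Equiv.piSplitAt n (fun m => Fin (q m)))
    (fun i => h (i n)) (fun z => h z.1) (fun i => rfl)]
  rw [Fintype.sum_prod_type]
  simp only [Finset.sum_const, card_univ, nsmul_eq_mul]
  rw [← Finset.mul_sum]
  congr 1
  rw [Fintype.card_pi]
  simp only [Fintype.card_fin]
  rw [Nat.cast_prod]
  exact (Finset.prod_subtype (Finset.univ.erase n)
    (by simp [Finset.mem_erase]) (fun m => (q m : ℝ))).symm

end

/-- **Lemma 4 of the DSA paper.**  With all `f_{n,i}` convex and differentiable,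
`q_min = min_n q_n`, `q_max = max_n q_n`, and `y⁺(i)` the table obtained from `y`
by replacing entry `i_n` at node `n` by `x_n`, the uniform average over joint
index choices `i ∈ ∏_n {1,…,q_n}` satisfies
`E_i[p(y⁺(i))] ≤ (1 − 1/q_max) p(y) + (1/q_min)[f(x) − f(x*) − ⟨∇f(x*), x − x*⟩]`. -/
theorem dsa_lemma4_table_decrement
    {N p : ℕ} {q : Fin N → ℕ} (hq : ∀ n, 0 < q n)
    (qmin qmax : ℕ)
    (hqmin₁ : ∀ n, qmin ≤ q n) (hqmin₂ : ∃ n, q n = qmin)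
    (hqmax₁ : ∀ n, q n ≤ qmax) (hqmax₂ : ∃ n, q n = qmax)
    (f : (n : Fin N) → Fin (q n) → Evec p → ℝ)
    (hdiff : ∀ n i, Differentiable ℝ (f n i))
    (hcvx : ∀ n i, ConvexOn ℝ Set.univ (f n i))
    (xstar : Evec p)
    (hxstar : ∀ w, ∑ n, locf f n xstar ≤ ∑ n, locf f n w)
    (x : Fin N → Evec p)
    (y : (n : Fin N) → Fin (q n) → Evec p) :
    (∏ n, (q n : ℝ))⁻¹ * ∑ i : (n : Fin N) → Fin (q n), ptbl f xstar (tblUpd x y i)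
      ≤ (1 - (qmax : ℝ)⁻¹) * ptbl f xstar y + (qmin : ℝ)⁻¹ * optgap f xstar x := by
  classical
  obtain ⟨n₀, hn₀⟩ := hqmin₂
  have hqminpos : 0 < qmin := hn₀ ▸ hq n₀
  obtain ⟨n₁, hn₁⟩ := hqmax₂
  have hqmaxpos : 0 < qmax := hn₁ ▸ hq n₁
  have hqR : ∀ n, (0:ℝ) < (q n : ℝ) := fun n => by exact_mod_cast hq n
  set D : (n : Fin N) → Fin (q n) → Evec p → ℝ :=
    fun n i v => Dgap (f n i) xstar v with hD
  set S : Fin N → ℝ := fun n => ∑ j, D n j (y n j) with hS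
  set T : Fin N → ℝ := fun n => ∑ j, D n j (x n) with hT
  have hD0 : ∀ n i v, 0 ≤ D n i v := fun n i v => Dgap_nonneg (hcvx n i) (hdiff n i) xstar v
  have hS0 : ∀ n, 0 ≤ S n := fun n => Finset.sum_nonneg fun j _ => hD0 n j _
  have hT0 : ∀ n, 0 ≤ T n := fun n => Finset.sum_nonneg fun j _ => hD0 n j _
  -- ptbl of y
  have hpy : ptbl f xstar y = ∑ n, (q n : ℝ)⁻¹ * S n := by
    simp only [hS, hD, ptbl, Dgap]
  -- gradient of locf
  have hgrad : ∀ n, gradient (locf f n) xstar = (q n : ℝ)⁻¹ • ∑ i, gradient (f n i) xstar := by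
    intro n
    have h1 : HasFDerivAt (fun w => ∑ i, f n i w)
        (∑ i, InnerProductSpace.toDual ℝ (Evec p) (gradient (f n i) xstar)) xstar :=
      HasFDerivAt.fun_sum fun i _ => (hdiff n i xstar).hasGradientAt
    have h2 := h1.const_mul ((q n : ℝ)⁻¹)
    have h3 : HasGradientAt (locf f n) ((q n : ℝ)⁻¹ • ∑ i, gradient (f n i) xstar) xstar := by
      rw [hasGradientAt_iff_hasFDerivAt, map_smul, map_sum]
      exact h2
    exact h3.gradient
  -- optgap summand
  have hgap : optgap f xstar x = ∑ n, (q n : ℝ)⁻¹ * T n := by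
    rw [optgap]
    refine Finset.sum_congr rfl fun n _ => ?_
    rw [hgrad n, real_inner_smul_left, sum_inner]
    simp only [locf, hT, hD, Dgap, Finset.sum_sub_distrib]
    ring
  -- per joint index
  have key1 : ∀ i : (n : Fin N) → Fin (q n), ptbl f xstar (tblUpd x y i)
      = ∑ n, (q n : ℝ)⁻¹ * (D n (i n) (x n) + (S n - D n (i n) (y n (i n)))) := by
    intro i
    rw [ptbl]
    refine Finset.sum_congr rfl fun n _ => ?_
    congr 1
    have hfun : ∀ j, D n j (tblUpd x y i n j)
        = Function.update (fun j => D n j (y n j)) (i n) (D n (i n) (x n)) j := by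
      intro j
      rcases eq_or_ne j (i n) with rfl | hne
      · simp [tblUpd]
      · simp [tblUpd, Function.update_of_ne hne]
    calc ∑ j, (f n j (tblUpd x y i n j) - f n j xstar
            - ⟪gradient (f n j) xstar, tblUpd x y i n j - xstar⟫)
        = ∑ j, D n j (tblUpd x y i n j) := by simp only [hD, Dgap]
      _ = ∑ j, Function.update (fun j => D n j (y n j)) (i n) (D n (i n) (x n)) j :=
          Finset.sum_congr rfl fun j _ => hfun j
      _ = D n (i n) (x n) + ∑ j ∈ Finset.univ \ {i n}, D n j (y n j) :=
          Finset.sum_update_of_mem (Finset.mem_univ (i n)) (fun j => D n j (y n j))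
            (D n (i n) (x n))
      _ = D n (i n) (x n) + (S n - D n (i n) (y n (i n))) := by
          rw [Finset.sdiff_singleton_eq_erase,
            Finset.sum_erase_eq_sub (Finset.mem_univ (i n)), hS]
  -- averaged sum
  have key2 : ∑ i : (n : Fin N) → Fin (q n), ptbl f xstar (tblUpd x y i)
      = ∑ n, (q n : ℝ)⁻¹ * ((∏ m ∈ Finset.univ.erase n, (q m : ℝ))
          * (T n + ((q n : ℝ) - 1) * S n)) := by
    rw [Finset.sum_congr rfl fun i _ => key1 i, Finset.sum_comm]
    refine Finset.sum_congr rfl fun n _ => ?_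
    rw [← Finset.mul_sum,
      sum_pi_eval q n (fun j => D n j (x n) + (S n - D n j (y n j)))]
    congr 2
    rw [Finset.sum_add_distrib]
    congr 1
    rw [Finset.sum_sub_distrib, Finset.sum_const, Finset.card_univ, Fintype.card_fin,
      nsmul_eq_mul]
    have hys : ∑ j, D n j (y n j) = S n := rfl
    rw [hys]; ring
  have hcpos : ∀ n, (0:ℝ) < ∏ m ∈ Finset.univ.erase n, (q m : ℝ) :=
    fun n => Finset.prod_pos fun m _ => hqR m
  have hfold : ∀ n ∈ Finset.univ, (∏ m, (q m : ℝ))⁻¹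
      * ((q n : ℝ)⁻¹ * ((∏ m ∈ Finset.univ.erase n, (q m : ℝ))
          * (T n + ((q n : ℝ) - 1) * S n)))
      = (q n : ℝ)⁻¹ * ((q n : ℝ)⁻¹ * (T n + ((q n : ℝ) - 1) * S n)) := by
    intro n _
    rw [← Finset.mul_prod_erase Finset.univ (fun m => (q m : ℝ)) (Finset.mem_univ n),
      mul_inv]
    linear_combination ((q n : ℝ)⁻¹ * (q n : ℝ)⁻¹ * (T n + ((q n : ℝ) - 1) * S n))
      * (inv_mul_cancel₀ (hcpos n).ne')
  have hterm : ∀ n ∈ Finset.univ, (q n : ℝ)⁻¹ * ((q n : ℝ)⁻¹ * (T n + ((q n : ℝ) - 1) * S n))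
      ≤ (1 - (qmax : ℝ)⁻¹) * ((q n : ℝ)⁻¹ * S n) + (qmin : ℝ)⁻¹ * ((q n : ℝ)⁻¹ * T n) := by
    intro n _
    have h1 : (qmax : ℝ)⁻¹ ≤ (q n : ℝ)⁻¹ := by
      apply inv_anti₀ (hqR n); exact_mod_cast hqmax₁ n
    have h2 : (q n : ℝ)⁻¹ ≤ (qmin : ℝ)⁻¹ := by
      apply inv_anti₀ (by exact_mod_cast hqminpos); exact_mod_cast hqmin₁ n
    have h3 : (q n : ℝ)⁻¹ * (q n : ℝ) = 1 := inv_mul_cancel₀ (hqR n).ne'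
    have h4 : (0:ℝ) ≤ (q n : ℝ)⁻¹ := (inv_pos.mpr (hqR n)).le
    have e1 : (q n : ℝ)⁻¹ * ((q n : ℝ)⁻¹ * (T n + ((q n : ℝ) - 1) * S n))
        = (1 - (q n : ℝ)⁻¹) * ((q n : ℝ)⁻¹ * S n) + (q n : ℝ)⁻¹ * ((q n : ℝ)⁻¹ * T n) := by
      linear_combination ((q n : ℝ)⁻¹ * S n) * h3
    rw [e1]
    have hb1 : (1 - (q n : ℝ)⁻¹) * ((q n : ℝ)⁻¹ * S n)
        ≤ (1 - (qmax : ℝ)⁻¹) * ((q n : ℝ)⁻¹ * S n) :=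
      mul_le_mul_of_nonneg_right (by linarith) (mul_nonneg h4 (hS0 n))
    have hb2 : (q n : ℝ)⁻¹ * ((q n : ℝ)⁻¹ * T n)
        ≤ (qmin : ℝ)⁻¹ * ((q n : ℝ)⁻¹ * T n) :=
      mul_le_mul_of_nonneg_right h2 (mul_nonneg h4 (hT0 n))
    linarith
  calc (∏ n, (q n : ℝ))⁻¹ * ∑ i : (n : Fin N) → Fin (q n), ptbl f xstar (tblUpd x y i)
      = ∑ n, (q n : ℝ)⁻¹ * ((q n : ℝ)⁻¹ * (T n + ((q n : ℝ) - 1) * S n)) := by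
        rw [key2, Finset.mul_sum]; exact Finset.sum_congr rfl hfold
    _ ≤ ∑ n, ((1 - (qmax : ℝ)⁻¹) * ((q n : ℝ)⁻¹ * S n)
          + (qmin : ℝ)⁻¹ * ((q n : ℝ)⁻¹ * T n)) := Finset.sum_le_sum hterm
    _ = (1 - (qmax : ℝ)⁻¹) * ptbl f xstar y + (qmin : ℝ)⁻¹ * optgap f xstar x := by
        rw [Finset.sum_add_distrib, ← Finset.mul_sum, ← Finset.mul_sum, hpy, hgap]
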